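/- Fix κ ∈ ℝ and let f, g : [0, r] → ℝ≥0 be twice differentiable functions with f'' + κ f ≤ g'' + κ g pointwise, f(0) = g(0), and f'(0) ≤ g'(0). Then f ≤ g on [0, min{r, π_κ}]. -/

import Mathlib

open Set Filter Topology

/-- Abstract comparison core: if `h(0) = 0`, `h'(0) ≥ 0`, `h'' + κ h ≥ 0` on `[0,r]`,
and `s` solves `s'' = -κ s` with `s(0)=0`, `s'(0)=1`, positive before `π/√κ`,
then `h ≥ 0` on `[0, min(r, π/√κ)]`. -/
theorem jacobi_key (κ r : ℝ) (h h' h'' s s' : ℝ → ℝ)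
    (hh : ∀ t ∈ Set.Icc (0:ℝ) r, HasDerivAt h (h' t) t)
    (hh' : ∀ t ∈ Set.Icc (0:ℝ) r, HasDerivAt h' (h'' t) t)
    (hs : ∀ t, HasDerivAt s (s' t) t)
    (hs' : ∀ t, HasDerivAt s' (-κ * s t) t)
    (hineq : ∀ t ∈ Set.Icc (0:ℝ) r, 0 ≤ h'' t + κ * h t)
    (h0 : h 0 = 0) (h0' : 0 ≤ h' 0)
    (hs0 : s 0 = 0) (hs'0 : s' 0 = 1)
    (hspos : ∀ t, 0 < t → (0 < κ → t < Real.pi / Real.sqrt κ) → 0 < s t)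
    (hsnonneg : ∀ t, 0 ≤ t → (0 < κ → t ≤ Real.pi / Real.sqrt κ) → 0 ≤ s t) :
    ∀ t ∈ Set.Icc (0:ℝ) r, (0 < κ → t ≤ Real.pi / Real.sqrt κ) → 0 ≤ h t := by
  have strict : ∀ t0, 0 < t0 → t0 ≤ r → (0 < κ → t0 < Real.pi / Real.sqrt κ) → 0 ≤ h t0 := by
    intro t0 ht0pos ht0r ht0π
    by_contra hneg
    push_neg at hneg
    have hr0 : (0:ℝ) ≤ r := ht0pos.le.trans ht0r
    have hsub : Icc (0:ℝ) t0 ⊆ Icc 0 r := Icc_subset_Icc le_rfl ht0r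
    set φ : ℝ → ℝ := fun t => h' t * s t - h t * s' t with hφdef
    have hφd : ∀ t ∈ Icc (0:ℝ) r, HasDerivAt φ ((h'' t + κ * h t) * s t) t := by
      intro t ht
      have := ((hh' t ht).mul (hs t)).sub ((hh t ht).mul (hs' t))
      refine this.congr_deriv ?_
      ring
    have hφmono : MonotoneOn φ (Icc 0 t0) := by
      apply monotoneOn_of_deriv_nonneg (convex_Icc 0 t0)
      · intro t ht
        exact (hφd t (hsub ht)).continuousAt.continuousWithinAt
      · intro t ht
        rw [interior_Icc] at ht
        exact (hφd t (hsub (Ioo_subset_Icc_self ht))).differentiableAt.differentiableWithinAt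
      · intro t ht
        rw [interior_Icc] at ht
        rw [(hφd t (hsub (Ioo_subset_Icc_self ht))).deriv]
        refine mul_nonneg (hineq t (hsub (Ioo_subset_Icc_self ht))) (hsnonneg t ht.1.le ?_)
        intro hκ
        exact (ht.2.trans (ht0π hκ)).le
    have hφ0 : φ 0 = 0 := by simp [hφdef, h0, hs0]
    have hφnn : ∀ t ∈ Icc (0:ℝ) t0, 0 ≤ φ t := fun t ht => by
      have := hφmono (left_mem_Icc.mpr ht0pos.le) ht ht.1
      linarith [hφ0]
    have hst0 : 0 < s t0 := hspos t0 ht0pos ht0π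
    set c : ℝ := -(h t0 / s t0) with hc
    have hcpos : 0 < c := by
      have := div_neg_of_neg_of_pos hneg hst0
      simp only [hc]; linarith
    have hlin : ∀ t ∈ Ioc (0:ℝ) t0, h t ≤ -(c * s t) := by
      intro t ht
      have hspos' : ∀ u ∈ Icc t t0, 0 < s u := fun u hu =>
        hspos u (ht.1.trans_le hu.1) (fun hκ => lt_of_le_of_lt hu.2 (ht0π hκ))
      have hqd : ∀ u ∈ Icc t t0, HasDerivAt (fun v => h v / s v) (φ u / s u ^ 2) u := by
        intro u hu
        have hu' : u ∈ Icc (0:ℝ) r := ⟨(ht.1.trans_le hu.1).le, hu.2.trans ht0r⟩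
        exact (hh u hu').div (hs u) (ne_of_gt (hspos' u hu))
      have hqmono : MonotoneOn (fun v => h v / s v) (Icc t t0) := by
        apply monotoneOn_of_deriv_nonneg (convex_Icc t t0)
        · intro u hu
          exact (hqd u hu).continuousAt.continuousWithinAt
        · intro u hu
          rw [interior_Icc] at hu
          exact (hqd u (Ioo_subset_Icc_self hu)).differentiableAt.differentiableWithinAt
        · intro u hu
          rw [interior_Icc] at hu
          rw [(hqd u (Ioo_subset_Icc_self hu)).deriv]
          exact div_nonneg (hφnn u ⟨(ht.1.trans hu.1).le, hu.2.le⟩) (sq_nonneg _)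
      have hmt : t ∈ Icc t t0 := left_mem_Icc.mpr ht.2
      have hmt0 : t0 ∈ Icc t t0 := right_mem_Icc.mpr ht.2
      have hle : h t / s t ≤ h t0 / s t0 := hqmono hmt hmt0 ht.2
      have hst : 0 < s t := hspos' t hmt
      rw [div_le_iff₀ hst] at hle
      calc h t ≤ h t0 / s t0 * s t := hle
        _ = -(c * s t) := by rw [hc]; ring
    -- contradiction near 0
    have hψ : HasDerivAt (fun t => h t + c * s t) (h' 0 + c * s' 0) 0 :=
      (hh 0 (left_mem_Icc.mpr hr0)).add ((hs 0).const_mul c)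
    rw [hasDerivAt_iff_tendsto_slope] at hψ
    have hpos : 0 < h' 0 + c * s' 0 := by rw [hs'0]; linarith
    have hev : ∀ᶠ u in 𝓝[≠] (0:ℝ), 0 < slope (fun t => h t + c * s t) 0 u :=
      hψ.eventually (eventually_gt_nhds hpos)
    have hev2 : ∀ᶠ u in 𝓝[>] (0:ℝ), 0 < slope (fun t => h t + c * s t) 0 u :=
      hev.filter_mono (nhdsWithin_mono 0 (fun x hx => hx.ne'))
    have hmem : Ioc (0:ℝ) t0 ∈ 𝓝[>] (0:ℝ) := Ioc_mem_nhdsGT_of_mem ⟨le_refl 0, ht0pos⟩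
    obtain ⟨u, hu1, hu2⟩ := (hev2.and (eventually_of_mem hmem (fun x hx => hx))).exists
    have hslope : slope (fun t => h t + c * s t) 0 u = (h u + c * s u) / u := by
      rw [slope_def_field]
      simp [h0, hs0]
    rw [hslope] at hu1
    have hupos : 0 < u := hu2.1
    have : 0 < h u + c * s u := by
      by_contra hcon
      push_neg at hcon
      have := div_nonpos_of_nonpos_of_nonneg hcon hupos.le
      linarith
    have := hlin u hu2
    linarith
  -- now handle the endpoint t = π/√κ by continuity
  intro t ht htπ
  rcases eq_or_lt_of_le ht.1 with h0t | h0t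
  · rw [← h0t, h0]
  by_cases hst : (0 < κ → t < Real.pi / Real.sqrt κ)
  · exact strict t h0t ht.2 hst
  · push_neg at hst
    obtain ⟨hκ, hπt⟩ := hst
    have htπ' : t = Real.pi / Real.sqrt κ := le_antisymm (htπ hκ) hπt
    have hcont : ContinuousWithinAt h (Iio t) t :=
      (hh t ht).continuousAt.continuousWithinAt
    have : ∀ᶠ u in 𝓝[<] t, 0 ≤ h u := by
      filter_upwards [Ioo_mem_nhdsLT_of_mem (⟨h0t, le_refl t⟩ : t ∈ Ioc 0 t)] with u hu
      exact strict u hu.1 (hu.2.le.trans ht.2) (fun _ => htπ' ▸ hu.2)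
    exact ge_of_tendsto hcont.tendsto this

/-- Jacobi comparison lemma: if `f'' + κ f ≤ g'' + κ g` on `[0,r]`, `f 0 = g 0` and
`f' 0 ≤ g' 0`, with `f, g ≥ 0`, then `f ≤ g` on `[0, min {r, π_κ}]`. -/
theorem jacobi_comparison
    (κ r : ℝ) (hr : 0 ≤ r) (f g f' g' f'' g'' : ℝ → ℝ)
    (hf : ∀ t ∈ Set.Icc (0 : ℝ) r, HasDerivAt f (f' t) t)
    (hf' : ∀ t ∈ Set.Icc (0 : ℝ) r, HasDerivAt f' (f'' t) t)
    (hg : ∀ t ∈ Set.Icc (0 : ℝ) r, HasDerivAt g (g' t) t)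
    (hg' : ∀ t ∈ Set.Icc (0 : ℝ) r, HasDerivAt g' (g'' t) t)
    (hfpos : ∀ t ∈ Set.Icc (0 : ℝ) r, 0 ≤ f t)
    (hgpos : ∀ t ∈ Set.Icc (0 : ℝ) r, 0 ≤ g t)
    (hineq : ∀ t ∈ Set.Icc (0 : ℝ) r, f'' t + κ * f t ≤ g'' t + κ * g t)
    (h0 : f 0 = g 0) (h0' : f' 0 ≤ g' 0) :
    ∀ t ∈ Set.Icc (0 : ℝ) r, (0 < κ → t ≤ Real.pi / Real.sqrt κ) → f t ≤ g t := by
  -- construct the comparison function s with s'' = -κ s, s 0 = 0, s' 0 = 1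
  obtain ⟨s, s', hs, hs', hs0, hs'0, hspos, hsnonneg⟩ :
      ∃ s s' : ℝ → ℝ, (∀ t, HasDerivAt s (s' t) t) ∧ (∀ t, HasDerivAt s' (-κ * s t) t) ∧
        s 0 = 0 ∧ s' 0 = 1 ∧
        (∀ t, 0 < t → (0 < κ → t < Real.pi / Real.sqrt κ) → 0 < s t) ∧
        (∀ t, 0 ≤ t → (0 < κ → t ≤ Real.pi / Real.sqrt κ) → 0 ≤ s t) := by
    rcases lt_trichotomy κ 0 with hκ | hκ | hκ
    · -- κ < 0 : s t = sinh(a t)/a with a = √(-κ)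
      set a := Real.sqrt (-κ) with ha
      have hapos : 0 < a := Real.sqrt_pos.mpr (by linarith)
      have ha2 : a ^ 2 = -κ := Real.sq_sqrt (by linarith)
      refine ⟨fun t => Real.sinh (a * t) / a, fun t => Real.cosh (a * t), ?_, ?_, ?_, ?_, ?_, ?_⟩
      · intro t
        have hinner : HasDerivAt (fun y : ℝ => a * y) a t := by
          simpa using (hasDerivAt_id t).const_mul a
        have h1 : HasDerivAt (fun t => Real.sinh (a * t)) (Real.cosh (a * t) * a) t :=
          (Real.hasDerivAt_sinh (a * t)).comp t hinner
        have := h1.div_const a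
        refine this.congr_deriv ?_
        field_simp
      · intro t
        have hinner : HasDerivAt (fun y : ℝ => a * y) a t := by
          simpa using (hasDerivAt_id t).const_mul a
        have h1 : HasDerivAt (fun t => Real.cosh (a * t)) (Real.sinh (a * t) * a) t :=
          (Real.hasDerivAt_cosh (a * t)).comp t hinner
        convert h1 using 1
        rw [← ha2]
        field_simp
      · simp
      · simp
      · intro t ht _
        exact div_pos (Real.sinh_pos_iff.mpr (by positivity)) hapos
      · intro t ht _
        have : 0 ≤ a * t := by positivity
        exact div_nonneg (by simpa using Real.sinh_nonneg_iff.mpr this) hapos.le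
    · -- κ = 0 : s t = t
      subst hκ
      refine ⟨fun t => t, fun _ => 1, fun t => hasDerivAt_id t, ?_, rfl, rfl, ?_, ?_⟩
      · intro t
        simpa using hasDerivAt_const t (1:ℝ)
      · exact fun t ht _ => ht
      · exact fun t ht _ => ht
    · -- κ > 0 : s t = sin(a t)/a with a = √κ
      set a := Real.sqrt κ with ha
      have hapos : 0 < a := Real.sqrt_pos.mpr hκ
      have ha2 : a ^ 2 = κ := Real.sq_sqrt hκ.le
      refine ⟨fun t => Real.sin (a * t) / a, fun t => Real.cos (a * t), ?_, ?_, ?_, ?_, ?_, ?_⟩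
      · intro t
        have hinner : HasDerivAt (fun y : ℝ => a * y) a t := by
          simpa using (hasDerivAt_id t).const_mul a
        have h1 : HasDerivAt (fun t => Real.sin (a * t)) (Real.cos (a * t) * a) t :=
          (Real.hasDerivAt_sin (a * t)).comp t hinner
        have := h1.div_const a
        refine this.congr_deriv ?_
        field_simp
      · intro t
        have hinner : HasDerivAt (fun y : ℝ => a * y) a t := by
          simpa using (hasDerivAt_id t).const_mul a
        have h1 : HasDerivAt (fun t => Real.cos (a * t)) (-Real.sin (a * t) * a) t :=
          (Real.hasDerivAt_cos (a * t)).comp t hinner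
        convert h1 using 1
        rw [← ha2]
        field_simp
      · simp
      · simp
      · intro t ht htπ
        have h1 : a * t < Real.pi := by
          have := htπ hκ
          rw [lt_div_iff₀ hapos] at this
          linarith [this]
        exact div_pos (Real.sin_pos_of_pos_of_lt_pi (by positivity) h1) hapos
      · intro t ht htπ
        have h1 : a * t ≤ Real.pi := by
          have := htπ hκ
          rw [le_div_iff₀ hapos] at this
          linarith [this]
        exact div_nonneg (Real.sin_nonneg_of_nonneg_of_le_pi (by positivity) h1) hapos.le
  intro t ht htπ
  have key := jacobi_key κ r (fun t => g t - f t) (fun t => g' t - f' t)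
    (fun t => g'' t - f'' t) s s'
    (fun t ht => (hg t ht).sub (hf t ht)) (fun t ht => (hg' t ht).sub (hf' t ht))
    hs hs' (fun t ht => by linarith [hineq t ht]) (by simp [h0]) (by simp [h0'])
    hs0 hs'0 hspos hsnonneg t ht htπ
  linarith
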